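/- Let M ≥ F + G and let Φ be a bisymmetric Boolean function on [M]^{[F]} × [M]^{[G]}. For any M' with F + G ≤ M' < M, let Φ' be the restriction of Φ to input pairs with range contained in [M']. Then for every 0 < ε < 1/2 and every degree d: there is a polynomial of degree ≤ d in z_1,…,z_M, w_1,…,w_M that ε-approximates Φ if and only if there is a polynomial of degree ≤ d in z'_1,…,z'_{M'}, w'_1,…,w'_{M'} that ε-approximates Φ'. -/

import Mathlib

open Finset MvPolynomial Nat

namespace Stmt14Aux

variable {γ δ : Type*} [Fintype γ] [Fintype δ] [DecidableEq γ] [DecidableEq δ]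

/-- Any two embeddings of a fintype into a fintype are related by a permutation. -/
lemma exists_perm_comp (e b : γ ↪ δ) : ∃ σ : Equiv.Perm δ, ∀ j, σ (e j) = b j := by
  classical
  set se : Finset δ := Finset.univ.image e with hse
  set sb : Finset δ := Finset.univ.image b with hsb
  have eMem : ∀ j, e j ∈ se := fun j => Finset.mem_image_of_mem _ (Finset.mem_univ j)
  have bMem : ∀ j, b j ∈ sb := fun j => Finset.mem_image_of_mem _ (Finset.mem_univ j)
  have eBij : Function.Bijective (fun j : γ => (⟨e j, eMem j⟩ : {x // x ∈ se})) := by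
    constructor
    · intro a b' h; exact e.injective (congrArg Subtype.val h)
    · rintro ⟨x, hx⟩
      rcases Finset.mem_image.1 hx with ⟨j, _, hj⟩
      exact ⟨j, Subtype.ext hj⟩
  have bBij : Function.Bijective (fun j : γ => (⟨b j, bMem j⟩ : {x // x ∈ sb})) := by
    constructor
    · intro a b' h; exact b.injective (congrArg Subtype.val h)
    · rintro ⟨x, hx⟩
      rcases Finset.mem_image.1 hx with ⟨j, _, hj⟩
      exact ⟨j, Subtype.ext hj⟩
  let eE : γ ≃ {x // x ∈ se} := Equiv.ofBijective _ eBij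
  let bE : γ ≃ {x // x ∈ sb} := Equiv.ofBijective _ bBij
  let e' : {x // x ∈ se} ≃ {x // x ∈ sb} := eE.symm.trans bE
  refine ⟨e'.extendSubtype, fun j => ?_⟩
  rw [Equiv.extendSubtype_apply_of_mem e' (e j) (eMem j)]
  have h1 : (⟨e j, eMem j⟩ : {x // x ∈ se}) = eE j := rfl
  have : e' ⟨e j, eMem j⟩ = bE j := by
    simp only [e', Equiv.trans_apply, h1, Equiv.symm_apply_apply]
  rw [this]
  rfl

/-- Number of permutations fixing an embedded copy of `γ` pointwise. -/
lemma card_stab (e : γ ↪ δ) :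
    Fintype.card {σ : Equiv.Perm δ // ∀ j, σ (e j) = e j}
      = (Fintype.card δ - Fintype.card γ)! := by
  classical
  set se : Finset δ := Finset.univ.image e with hse
  have h1 : {σ : Equiv.Perm δ // ∀ j, σ (e j) = e j}
      ≃ {σ : Equiv.Perm δ // ∀ a, ¬ (a ∉ se) → σ a = a} :=
    Equiv.subtypeEquivRight (by
      intro σ
      constructor
      · intro h a ha
        rcases Finset.mem_image.1 (not_not.1 ha) with ⟨j, _, rfl⟩
        exact h j
      · intro h j
        exact h (e j) (not_not.2 (Finset.mem_image_of_mem _ (Finset.mem_univ j))))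
  have h2 := Equiv.Perm.subtypeEquivSubtypePerm (fun a : δ => a ∉ se)
  rw [Fintype.card_congr h1, ← Fintype.card_congr h2, Fintype.card_perm]
  congr 1
  have h3 : Fintype.card {x : δ // ¬ x ∉ se} = Fintype.card γ := by
    have : Fintype.card {x : δ // ¬ x ∉ se} = Fintype.card {x : δ // x ∈ se} :=
      Fintype.card_congr (Equiv.subtypeEquivRight (fun x => not_not))
    rw [this]
    have : Fintype.card {x : δ // x ∈ se} = se.card := Fintype.card_coe se
    rw [this, hse, Finset.card_image_of_injective _ e.injective, Finset.card_univ]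
  have := Fintype.card_subtype_compl (fun x : δ => ¬ x ∉ se)
  -- card {x // ¬ ¬ x ∉ se} = card δ - card {x // ¬ x ∉ se}
  have h4 : Fintype.card {x : δ // x ∉ se}
      = Fintype.card δ - Fintype.card {x : δ // ¬ x ∉ se} := by
    have h5 : Fintype.card {x : δ // x ∉ se}
        = Fintype.card {x : δ // ¬ ¬ x ∉ se} :=
      Fintype.card_congr (Equiv.subtypeEquivRight (fun x => (not_not).symm))
    rw [h5, this]
  rw [h4, h3]

lemma card_fiber (e b : γ ↪ δ) :
    (Finset.univ.filter fun σ : Equiv.Perm δ => ⇑σ ∘ ⇑e = ⇑b).card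
      = (Fintype.card δ - Fintype.card γ)! := by
  classical
  obtain ⟨σ₀, hσ₀⟩ := exists_perm_comp e b
  rw [← card_stab e, Fintype.card_subtype]
  apply Finset.card_bij (fun σ _ => σ₀⁻¹ * σ)
  · intro σ hσ
    rw [Finset.mem_filter] at hσ ⊢
    refine ⟨Finset.mem_univ _, fun j => ?_⟩
    have : σ (e j) = b j := congrFun hσ.2 j
    rw [Equiv.Perm.mul_apply, this, ← hσ₀ j, ← Equiv.Perm.mul_apply, inv_mul_cancel, Equiv.Perm.one_apply]
  · intro σ₁ h₁ σ₂ h₂ h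
    exact mul_left_cancel h
  · intro π hπ
    rw [Finset.mem_filter] at hπ
    refine ⟨σ₀ * π, ?_, by group⟩
    rw [Finset.mem_filter]
    refine ⟨Finset.mem_univ _, funext fun j => ?_⟩
    simp only [Function.comp_apply, Equiv.Perm.mul_apply, hπ.2 j, hσ₀ j]

/-- Summing a function of `σ ∘ e` over all permutations equals a factorial times
the sum over injections. -/
lemma sum_perm_comp (e : γ ↪ δ) (H : (γ → δ) → ℝ) :
    ∑ σ : Equiv.Perm δ, H (⇑σ ∘ ⇑e)
      = ((Fintype.card δ - Fintype.card γ)! : ℝ) *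
          ∑ r ∈ Finset.univ.filter (fun r : γ → δ => Function.Injective r), H r := by
  classical
  rw [Finset.sum_comp H (fun σ : Equiv.Perm δ => ⇑σ ∘ ⇑e)]
  have himg : (Finset.univ.image fun σ : Equiv.Perm δ => ⇑σ ∘ ⇑e)
      = Finset.univ.filter (fun r : γ → δ => Function.Injective r) := by
    ext r
    simp only [Finset.mem_image, Finset.mem_univ, true_and, Finset.mem_filter]
    constructor
    · rintro ⟨σ, rfl⟩; exact σ.injective.comp e.injective
    · intro hr
      obtain ⟨σ, hσ⟩ := exists_perm_comp e ⟨r, hr⟩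
      exact ⟨σ, funext fun j => hσ j⟩
  rw [himg, Finset.mul_sum]
  refine Finset.sum_congr rfl fun r hr => ?_
  have hrinj : Function.Injective r := (Finset.mem_filter.1 hr).2
  have hc := card_fiber e ⟨r, hrinj⟩
  simp only [Function.Embedding.coeFn_mk] at hc
  rw [hc, nsmul_eq_mul]

variable {M M' : ℕ}

/-- number of "active index pairs" of a monomial -/
noncomputable def kk (μ : (Fin M' ⊕ Fin M') →₀ ℕ) : ℕ :=
  (Finset.univ.filter (fun j : Fin M' => μ (Sum.inl j) ≠ 0 ∨ μ (Sum.inr j) ≠ 0)).card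

/-- The extension of a multisymmetric polynomial in `2 M'` variables to `2 M` variables. -/
noncomputable def TT (hM : M' ≤ M) (S : MvPolynomial (Fin M' ⊕ Fin M') ℝ) :
    MvPolynomial (Fin M ⊕ Fin M) ℝ :=
  ∑ μ ∈ S.support,
    (S.coeff μ * (((M' - kk μ)! : ℝ) / (((M - kk μ)! : ℝ) * ((M')! : ℝ)))) •
      ∑ σ : Equiv.Perm (Fin M),
        monomial (Finsupp.mapDomain
          (Sum.map (⇑σ ∘ Fin.castLE hM) (⇑σ ∘ Fin.castLE hM)) μ) (1 : ℝ)

lemma TT_totalDegree_le (hM : M' ≤ M) (S : MvPolynomial (Fin M' ⊕ Fin M') ℝ) (d : ℕ)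
    (hd : S.totalDegree ≤ d) : (TT hM S).totalDegree ≤ d := by
  refine (totalDegree_finset_sum _ _).trans (Finset.sup_le fun μ hμ => ?_)
  refine (totalDegree_smul_le (S.coeff μ * (((M' - kk μ)! : ℝ) / (((M - kk μ)! : ℝ) * ((M')! : ℝ)))) _).trans ?_
  refine (totalDegree_finset_sum _ _).trans (Finset.sup_le fun σ _ => ?_)
  rw [totalDegree_monomial _ (one_ne_zero)]
  have h1 : (Finsupp.mapDomain
      (Sum.map (⇑σ ∘ Fin.castLE hM) (⇑σ ∘ Fin.castLE hM)) μ).sum (fun _ e => e)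
      = μ.sum (fun _ e => e) :=
    Finsupp.sum_mapDomain_index (fun _ => rfl) (fun _ _ _ => rfl)
  rw [h1]
  exact le_trans (le_totalDegree hμ) hd

lemma TT_rename (hM : M' ≤ M) (S : MvPolynomial (Fin M' ⊕ Fin M') ℝ)
    (σ : Equiv.Perm (Fin M)) :
    rename (Sum.map ⇑σ ⇑σ) (TT hM S) = TT hM S := by
  unfold TT
  rw [map_sum]
  refine Finset.sum_congr rfl fun μ _ => ?_
  rw [map_smul, map_sum]
  congr 1
  have h1 : ∀ σ' : Equiv.Perm (Fin M),
      rename (Sum.map ⇑σ ⇑σ) (monomial (Finsupp.mapDomain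
          (Sum.map (⇑σ' ∘ Fin.castLE hM) (⇑σ' ∘ Fin.castLE hM)) μ) (1:ℝ))
        = monomial (Finsupp.mapDomain
          (Sum.map (⇑(σ * σ') ∘ Fin.castLE hM) (⇑(σ * σ') ∘ Fin.castLE hM)) μ) (1:ℝ) := by
    intro σ'
    rw [rename_monomial, ← Finsupp.mapDomain_comp]
    have hc : Sum.map ⇑σ ⇑σ ∘ Sum.map (⇑σ' ∘ Fin.castLE hM) (⇑σ' ∘ Fin.castLE hM)
        = Sum.map (⇑(σ * σ') ∘ Fin.castLE hM) (⇑(σ * σ') ∘ Fin.castLE hM) := by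
      funext x
      cases x <;> simp [Sum.map, Function.comp, Equiv.Perm.mul_apply]
    rw [hc]
  simp only [h1]
  exact Equiv.sum_comp (Equiv.mulLeft σ) (fun π : Equiv.Perm (Fin M) =>
    monomial (Finsupp.mapDomain
      (Sum.map (⇑π ∘ Fin.castLE hM) (⇑π ∘ Fin.castLE hM)) μ) (1:ℝ))

lemma eval_monomial_push (u : Fin M' → Fin M) (hu : Function.Injective u)
    (v : Fin M ⊕ Fin M → ℝ) (μ : (Fin M' ⊕ Fin M') →₀ ℕ) :
    eval v (monomial (Finsupp.mapDomain (Sum.map u u) μ) (1:ℝ))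
      = ∏ j : Fin M',
          (v (Sum.inl (u j)) ^ μ (Sum.inl j) * v (Sum.inr (u j)) ^ μ (Sum.inr j)) := by
  classical
  have huu : Function.Injective (Sum.map u u) := Sum.map_injective.2 ⟨hu, hu⟩
  set ν := Finsupp.mapDomain (Sum.map u u) μ with hν
  have hzl : ∀ i : Fin M, i ∉ Set.range u → ν (Sum.inl i) = 0 := by
    intro i hi
    rw [hν]
    apply Finsupp.mapDomain_notin_range
    rintro ⟨x, hx⟩
    cases x with
    | inl a => simp only [Sum.map_inl, Sum.inl.injEq] at hx; exact hi ⟨a, hx⟩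
    | inr a => simp at hx
  have hzr : ∀ i : Fin M, i ∉ Set.range u → ν (Sum.inr i) = 0 := by
    intro i hi
    rw [hν]
    apply Finsupp.mapDomain_notin_range
    rintro ⟨x, hx⟩
    cases x with
    | inl a => simp at hx
    | inr a => simp only [Sum.map_inr, Sum.inr.injEq] at hx; exact hi ⟨a, hx⟩
  have hml : ∀ j : Fin M', ν (Sum.inl (u j)) = μ (Sum.inl j) := by
    intro j
    rw [hν]
    have := Finsupp.mapDomain_apply huu μ (Sum.inl j)
    simpa using this
  have hmr : ∀ j : Fin M', ν (Sum.inr (u j)) = μ (Sum.inr j) := by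
    intro j
    rw [hν]
    have := Finsupp.mapDomain_apply huu μ (Sum.inr j)
    simpa using this
  have key : ∀ t : Fin M → ℝ, (∀ i, i ∉ Set.range u → t i = 1) →
      ∏ i, t i = ∏ j, t (u j) := by
    intro t ht
    rw [← Finset.prod_image (f := t) (g := u) (fun a _ b _ h => hu h)]
    refine (Finset.prod_subset (Finset.subset_univ _) fun i _ hi => ht i ?_).symm
    rintro ⟨j, hj⟩
    exact hi (Finset.mem_image.2 ⟨j, Finset.mem_univ j, hj⟩)
  rw [eval_monomial, one_mul]
  rw [Finsupp.prod_fintype _ _ (fun a => pow_zero _)]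
  rw [Fintype.prod_sum_type]
  have hL : ∏ i : Fin M, v (Sum.inl i) ^ ν (Sum.inl i)
      = ∏ j : Fin M', v (Sum.inl (u j)) ^ μ (Sum.inl j) := by
    refine (key (fun i => v (Sum.inl i) ^ ν (Sum.inl i)) (fun i hi => by
      show v (Sum.inl i) ^ ν (Sum.inl i) = 1
      rw [hzl i hi, pow_zero])).trans ?_
    refine Finset.prod_congr rfl fun j _ => ?_
    show v (Sum.inl (u j)) ^ ν (Sum.inl (u j)) = _
    rw [hml j]
  have hR : ∏ i : Fin M, v (Sum.inr i) ^ ν (Sum.inr i)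
      = ∏ j : Fin M', v (Sum.inr (u j)) ^ μ (Sum.inr j) := by
    refine (key (fun i => v (Sum.inr i) ^ ν (Sum.inr i)) (fun i hi => by
      show v (Sum.inr i) ^ ν (Sum.inr i) = 1
      rw [hzr i hi, pow_zero])).trans ?_
    refine Finset.prod_congr rfl fun j _ => ?_
    show v (Sum.inr (u j)) ^ ν (Sum.inr (u j)) = _
    rw [hmr j]
  rw [hL, hR, ← Finset.prod_mul_distrib]

lemma claimA (hM : M' ≤ M) (v : Fin M ⊕ Fin M → ℝ)
    (hv : ∀ i : Fin M, M' ≤ (i : ℕ) → v (Sum.inl i) = 0 ∧ v (Sum.inr i) = 0)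
    (μ : (Fin M' ⊕ Fin M') →₀ ℕ) :
    (((M' - kk μ)! : ℝ) / (((M - kk μ)! : ℝ) * ((M')! : ℝ))) *
        ∑ σ : Equiv.Perm (Fin M),
          eval v (monomial (Finsupp.mapDomain
            (Sum.map (⇑σ ∘ Fin.castLE hM) (⇑σ ∘ Fin.castLE hM)) μ) (1:ℝ))
      = (((M')! : ℝ))⁻¹ *
        ∑ τ : Equiv.Perm (Fin M'),
          eval ((v ∘ Sum.map (Fin.castLE hM) (Fin.castLE hM)) ∘ Sum.map ⇑τ ⇑τ)
            (monomial μ (1:ℝ)) := by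
  classical
  set ι : Fin M' → Fin M := Fin.castLE hM with hι
  have hιinj : Function.Injective ι := Fin.castLE_injective hM
  set K : Finset (Fin M') :=
    Finset.univ.filter (fun j : Fin M' => μ (Sum.inl j) ≠ 0 ∨ μ (Sum.inr j) ≠ 0) with hK
  have hkk : kk μ = K.card := rfl
  set g : Fin M → Fin M' → ℝ :=
    fun x j => v (Sum.inl x) ^ μ (Sum.inl j) * v (Sum.inr x) ^ μ (Sum.inr j) with hg
  -- `Hfun u` equals the K-restricted product
  have hKprod : ∀ u : Fin M' → Fin M,
      (∏ j : Fin M', g (u j) j) = ∏ j ∈ K, g (u j) j := by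
    intro u
    refine (Finset.prod_subset (Finset.subset_univ K) fun j _ hj => ?_).symm
    have : ¬(μ (Sum.inl j) ≠ 0 ∨ μ (Sum.inr j) ≠ 0) := by
      intro h; exact hj (Finset.mem_filter.2 ⟨Finset.mem_univ _, h⟩)
    push_neg at this
    simp [hg, this.1, this.2]
  -- subtype version
  set Hs : ({x // x ∈ K} → Fin M) → ℝ := fun r => ∏ j : {x // x ∈ K}, g (r j) j.1 with hHs
  have hsub : ∀ u : Fin M' → Fin M, (∏ j ∈ K, g (u j) j) = Hs (fun j => u j.1) := by
    intro u
    rw [hHs]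
    exact (Finset.prod_coe_sort K (fun j => g (u j) j)).symm
  -- LHS rewriting
  set e₁ : {x // x ∈ K} ↪ Fin M := ⟨fun j => ι j.1, hιinj.comp Subtype.val_injective⟩ with he₁
  have hLterm : ∀ σ : Equiv.Perm (Fin M),
      eval v (monomial (Finsupp.mapDomain
          (Sum.map (⇑σ ∘ ι) (⇑σ ∘ ι)) μ) (1:ℝ)) = Hs (⇑σ ∘ ⇑e₁) := by
    intro σ
    rw [eval_monomial_push (⇑σ ∘ ι) (σ.injective.comp hιinj) v μ]
    rw [hKprod (⇑σ ∘ ι), hsub (⇑σ ∘ ι)]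
    rfl
  set e₂ : {x // x ∈ K} ↪ Fin M' := ⟨Subtype.val, Subtype.val_injective⟩ with he₂
  set Hs₂ : ({x // x ∈ K} → Fin M') → ℝ := fun r => Hs (fun j => ι (r j)) with hHs₂
  have hRterm : ∀ τ : Equiv.Perm (Fin M'),
      eval ((v ∘ Sum.map ι ι) ∘ Sum.map ⇑τ ⇑τ) (monomial μ (1:ℝ)) = Hs₂ (⇑τ ∘ ⇑e₂) := by
    intro τ
    rw [eval_monomial, one_mul, Finsupp.prod_fintype _ _ (fun a => pow_zero _),
      Fintype.prod_sum_type, ← Finset.prod_mul_distrib]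
    have : (∏ j : Fin M',
        ((v ∘ Sum.map ι ι) ∘ Sum.map ⇑τ ⇑τ) (Sum.inl j) ^ μ (Sum.inl j) *
          ((v ∘ Sum.map ι ι) ∘ Sum.map ⇑τ ⇑τ) (Sum.inr j) ^ μ (Sum.inr j))
        = ∏ j : Fin M', g (ι (τ j)) j := by
      refine Finset.prod_congr rfl fun j _ => ?_
      rfl
    rw [this, hKprod (fun j => ι (τ j)), hsub (fun j => ι (τ j))]
    rfl
  simp only [hLterm, hRterm]
  rw [sum_perm_comp e₁ Hs, sum_perm_comp e₂ Hs₂]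
  have hcK : Fintype.card {x // x ∈ K} = kk μ := by rw [Fintype.card_coe, hkk]
  -- the bridge between injections into `Fin M` and into `Fin M'`
  have hvanish : ∀ r : {x // x ∈ K} → Fin M,
      (∃ j : {x // x ∈ K}, M' ≤ ((r j : Fin M) : ℕ)) → Hs r = 0 := by
    intro r ⟨j₀, hj₀⟩
    have hz := hv (r j₀) hj₀
    rw [hHs]
    apply Finset.prod_eq_zero (Finset.mem_univ j₀)
    have hjK : μ (Sum.inl j₀.1) ≠ 0 ∨ μ (Sum.inr j₀.1) ≠ 0 :=
      (Finset.mem_filter.1 j₀.2).2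
    rcases hjK with h | h
    · rw [hg]
      simp only
      rw [hz.1, zero_pow h, zero_mul]
    · rw [hg]
      simp only
      rw [hz.2, zero_pow h, mul_zero]
  have hbridge :
      ∑ r ∈ Finset.univ.filter (fun r : {x // x ∈ K} → Fin M => Function.Injective r), Hs r
        = ∑ r' ∈ Finset.univ.filter
            (fun r' : {x // x ∈ K} → Fin M' => Function.Injective r'), Hs₂ r' := by
    have hpost : ∀ x ∈ Finset.univ.filter
        (fun r' : {x // x ∈ K} → Fin M' => Function.Injective r'),
        ∀ y ∈ Finset.univ.filter
        (fun r' : {x // x ∈ K} → Fin M' => Function.Injective r'),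
        (fun (r' : {x // x ∈ K} → Fin M') (j : {x // x ∈ K}) => ι (r' j)) x
          = (fun (r' : {x // x ∈ K} → Fin M') (j : {x // x ∈ K}) => ι (r' j)) y → x = y := by
      intro x _ y _ h
      funext j
      exact hιinj (congrFun h j)
    rw [← Finset.sum_image (g := fun (r' : {x // x ∈ K} → Fin M') (j : {x // x ∈ K}) => ι (r' j))
      (f := Hs) hpost]
    symm
    apply Finset.sum_subset
    · intro r hr
      rcases Finset.mem_image.1 hr with ⟨r', hr', rfl⟩
      have hr'inj : Function.Injective r' := (Finset.mem_filter.1 hr').2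
      exact Finset.mem_filter.2 ⟨Finset.mem_univ _, hιinj.comp hr'inj⟩
    · intro r hr hnot
      have hrinj : Function.Injective r := (Finset.mem_filter.1 hr).2
      apply hvanish
      by_contra hcon
      push_neg at hcon
      apply hnot
      refine Finset.mem_image.2 ⟨fun j => ⟨(r j : ℕ), hcon j⟩, ?_, ?_⟩
      · refine Finset.mem_filter.2 ⟨Finset.mem_univ _, ?_⟩
        intro a b hab
        have h' : ((r a : Fin M) : ℕ) = ((r b : Fin M) : ℕ) := by
          simpa [Fin.ext_iff] using hab
        exact hrinj (Fin.val_injective h')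
      · funext j
        apply Fin.val_injective
        rfl
  rw [hbridge, hcK, Fintype.card_fin, Fintype.card_fin]
  have h1 : ((M - kk μ)! : ℝ) ≠ 0 := Nat.cast_ne_zero.2 (Nat.factorial_ne_zero _)
  have h2 : (((M')!) : ℝ) ≠ 0 := Nat.cast_ne_zero.2 (Nat.factorial_ne_zero _)
  field_simp

lemma eval_TT (hM : M' ≤ M) (S : MvPolynomial (Fin M' ⊕ Fin M') ℝ)
    (hS : ∀ τ : Equiv.Perm (Fin M'), rename (Sum.map ⇑τ ⇑τ) S = S)
    (v : Fin M ⊕ Fin M → ℝ)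
    (hv : ∀ i : Fin M, M' ≤ (i : ℕ) → v (Sum.inl i) = 0 ∧ v (Sum.inr i) = 0) :
    eval v (TT hM S) = eval (v ∘ Sum.map (Fin.castLE hM) (Fin.castLE hM)) S := by
  classical
  set v' : Fin M' ⊕ Fin M' → ℝ := v ∘ Sum.map (Fin.castLE hM) (Fin.castLE hM) with hv'
  have hSeval : ∀ w : (Fin M' ⊕ Fin M') → ℝ,
      eval w S = ∑ μ ∈ S.support, S.coeff μ * eval w (monomial μ (1:ℝ)) := by
    intro w
    conv_lhs => rw [← support_sum_monomial_coeff S]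
    rw [map_sum]
    exact Finset.sum_congr rfl fun μ _ => by rw [eval_monomial, eval_monomial, one_mul]
  unfold TT
  rw [map_sum]
  have hterm : ∀ μ ∈ S.support,
      eval v ((S.coeff μ * (((M' - kk μ)! : ℝ) / (((M - kk μ)! : ℝ) * ((M')! : ℝ)))) •
        ∑ σ : Equiv.Perm (Fin M),
          monomial (Finsupp.mapDomain
            (Sum.map (⇑σ ∘ Fin.castLE hM) (⇑σ ∘ Fin.castLE hM)) μ) (1:ℝ))
      = S.coeff μ * ((((M')! : ℝ))⁻¹ *
          ∑ τ : Equiv.Perm (Fin M'), eval (v' ∘ Sum.map ⇑τ ⇑τ) (monomial μ (1:ℝ))) := by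
    intro μ _
    rw [smul_eq_C_mul, map_mul, eval_C, map_sum, mul_assoc]
    congr 1
    exact claimA hM v hv μ
  rw [Finset.sum_congr rfl hterm]
  have hSinv : ∀ τ : Equiv.Perm (Fin M'), eval (v' ∘ Sum.map ⇑τ ⇑τ) S = eval v' S := by
    intro τ
    conv_rhs => rw [← hS τ]
    rw [eval_rename]
  calc ∑ μ ∈ S.support, S.coeff μ * ((((M')! : ℝ))⁻¹ *
          ∑ τ : Equiv.Perm (Fin M'), eval (v' ∘ Sum.map ⇑τ ⇑τ) (monomial μ (1:ℝ)))
      = (((M')! : ℝ))⁻¹ * ∑ μ ∈ S.support, S.coeff μ *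
          ∑ τ : Equiv.Perm (Fin M'), eval (v' ∘ Sum.map ⇑τ ⇑τ) (monomial μ (1:ℝ)) := by
        rw [Finset.mul_sum]
        exact Finset.sum_congr rfl fun μ _ => by ring
    _ = (((M')! : ℝ))⁻¹ * ∑ τ : Equiv.Perm (Fin M'),
          ∑ μ ∈ S.support, S.coeff μ * eval (v' ∘ Sum.map ⇑τ ⇑τ) (monomial μ (1:ℝ)) := by
        congr 1
        rw [Finset.sum_comm]
        exact Finset.sum_congr rfl fun μ _ => by rw [Finset.mul_sum]
    _ = (((M')! : ℝ))⁻¹ * ∑ τ : Equiv.Perm (Fin M'), eval (v' ∘ Sum.map ⇑τ ⇑τ) S := by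
        congr 1
        exact Finset.sum_congr rfl fun τ _ => (hSeval _).symm
    _ = (((M')! : ℝ))⁻¹ * ∑ τ : Equiv.Perm (Fin M'), eval v' S := by
        congr 1
        exact Finset.sum_congr rfl fun τ _ => hSinv τ
    _ = eval v' S := by
        rw [Finset.sum_const, Finset.card_univ, Fintype.card_perm, Fintype.card_fin,
          nsmul_eq_mul, ← mul_assoc, inv_mul_cancel₀
          (Nat.cast_ne_zero.2 (Nat.factorial_ne_zero M')), one_mul]

/-- total degree bound for substituting degree-≤1 polynomials -/
lemma totalDegree_aeval_le {σ τ : Type*} (s : σ → MvPolynomial τ ℝ)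
    (hs : ∀ i, (s i).totalDegree ≤ 1) (p : MvPolynomial σ ℝ) :
    (aeval s p).totalDegree ≤ p.totalDegree := by
  classical
  rw [aeval_def, eval₂_eq]
  refine (totalDegree_finset_sum _ _).trans (Finset.sup_le fun μ hμ => ?_)
  refine (totalDegree_mul _ _).trans ?_
  have h1 : (algebraMap ℝ (MvPolynomial τ ℝ) (coeff μ p)).totalDegree = 0 :=
    totalDegree_C _
  rw [h1, zero_add]
  refine (totalDegree_finset_prod _ _).trans ?_
  have h2 : ∀ i ∈ μ.support, ((s i) ^ μ i).totalDegree ≤ μ i := by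
    intro i _
    refine (totalDegree_pow _ _).trans ?_
    calc μ i * (s i).totalDegree ≤ μ i * 1 := Nat.mul_le_mul_left _ (hs i)
      _ = μ i := mul_one _
  refine (Finset.sum_le_sum h2).trans ?_
  exact le_totalDegree (p := p) hμ

lemma eval_aeval' {σ τ : Type*} (w : τ → ℝ) (s : σ → MvPolynomial τ ℝ)
    (p : MvPolynomial σ ℝ) :
    eval w (aeval s p) = eval (fun i => eval w (s i)) p := by
  rw [aeval_def, eval₂_comp_left (eval w)]
  have h1 : (eval w).comp (algebraMap ℝ (MvPolynomial τ ℝ)) = RingHom.id ℝ := by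
    ext r
    simp [algebraMap_eq]
  rw [h1]
  rfl

lemma avg_mem_Icc {ι : Type*} [Fintype ι] [Nonempty ι] (x : ι → ℝ)
    (h : ∀ i, x i ∈ Set.Icc (0:ℝ) 1) :
    ((Fintype.card ι : ℝ))⁻¹ * ∑ i, x i ∈ Set.Icc (0:ℝ) 1 := by
  have hc : (0:ℝ) < (Fintype.card ι : ℝ) := by
    exact_mod_cast Fintype.card_pos
  constructor
  · apply mul_nonneg (inv_nonneg.2 hc.le)
    exact Finset.sum_nonneg fun i _ => (h i).1
  · rw [inv_mul_le_iff₀ hc, mul_one]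
    calc ∑ i, x i ≤ ∑ _i : ι, (1:ℝ) := Finset.sum_le_sum fun i _ => (h i).2
      _ = (Fintype.card ι : ℝ) := by rw [Finset.sum_const, Finset.card_univ, nsmul_eq_mul, mul_one]

lemma avg_abs_le {ι : Type*} [Fintype ι] [Nonempty ι] (x : ι → ℝ) (y ε : ℝ)
    (h : ∀ i, |x i - y| ≤ ε) :
    |((Fintype.card ι : ℝ))⁻¹ * ∑ i, x i - y| ≤ ε := by
  have hc : (0:ℝ) < (Fintype.card ι : ℝ) := by exact_mod_cast Fintype.card_pos
  have h1 : ((Fintype.card ι : ℝ))⁻¹ * ∑ i, x i - y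
      = ((Fintype.card ι : ℝ))⁻¹ * ∑ i, (x i - y) := by
    rw [Finset.sum_sub_distrib, Finset.sum_const, Finset.card_univ, nsmul_eq_mul, mul_sub]
    rw [← mul_assoc, inv_mul_cancel₀ hc.ne', one_mul]
  rw [h1, abs_mul, abs_inv, abs_of_nonneg hc.le]
  rw [inv_mul_le_iff₀ hc]
  calc |∑ i, (x i - y)| ≤ ∑ i, |x i - y| := Finset.abs_sum_le_sum_abs _ _
    _ ≤ ∑ _i : ι, ε := Finset.sum_le_sum fun i _ => h i
    _ = (Fintype.card ι : ℝ) * ε := by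
        rw [Finset.sum_const, Finset.card_univ, nsmul_eq_mul]
    _ = ε * (Fintype.card ι : ℝ) := mul_comm _ _
    _ = (Fintype.card ι : ℝ) * ε := mul_comm _ _

end Stmt14Aux



open Stmt14Aux

open Classical in
/-- Range reduction for bisymmetric properties: for `M ≥ F + G` and
`F + G ≤ M' < M`, a degree-`d` `ε`-approximating polynomial in the preimage-count
variables `z_1,…,z_M, w_1,…,w_M` for `Φ` exists iff one in
`z'_1,…,z'_{M'}, w'_1,…,w'_{M'}` for the restriction `Φ'` exists. -/
theorem stmt14 (F G M M' : ℕ) (hFG : F + G ≤ M') (hM' : M' < M) (d : ℕ) (ε : ℝ)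
    (hε : 0 < ε) (hε2 : ε < 1 / 2)
    (Φ : (Fin F → Fin M) → (Fin G → Fin M) → Bool)
    (hsym : ∀ (f : Fin F → Fin M) (g : Fin G → Fin M) (πF : Equiv.Perm (Fin F))
      (πG : Equiv.Perm (Fin G)) (σ : Equiv.Perm (Fin M)),
      Φ (σ ∘ f ∘ πF) (σ ∘ g ∘ πG) = Φ f g) :
    (∃ Q : MvPolynomial (Fin M ⊕ Fin M) ℝ,
      Q.totalDegree ≤ d ∧
      ∀ (f : Fin F → Fin M) (g : Fin G → Fin M),
        MvPolynomial.eval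
            (Sum.elim
              (fun jj : Fin M => ((Finset.univ.filter (fun i => f i = jj)).card : ℝ))
              (fun jj : Fin M => ((Finset.univ.filter (fun k => g k = jj)).card : ℝ))) Q ∈
          Set.Icc (0 : ℝ) 1 ∧
        |MvPolynomial.eval
            (Sum.elim
              (fun jj : Fin M => ((Finset.univ.filter (fun i => f i = jj)).card : ℝ))
              (fun jj : Fin M => ((Finset.univ.filter (fun k => g k = jj)).card : ℝ))) Q -
          (if Φ f g then 1 else 0)| ≤ ε) ↔
    (∃ Q' : MvPolynomial (Fin M' ⊕ Fin M') ℝ,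
      Q'.totalDegree ≤ d ∧
      ∀ (f' : Fin F → Fin M') (g' : Fin G → Fin M'),
        MvPolynomial.eval
            (Sum.elim
              (fun jj : Fin M' => ((Finset.univ.filter (fun i => f' i = jj)).card : ℝ))
              (fun jj : Fin M' => ((Finset.univ.filter (fun k => g' k = jj)).card : ℝ))) Q' ∈
          Set.Icc (0 : ℝ) 1 ∧
        |MvPolynomial.eval
            (Sum.elim
              (fun jj : Fin M' => ((Finset.univ.filter (fun i => f' i = jj)).card : ℝ))
              (fun jj : Fin M' => ((Finset.univ.filter (fun k => g' k = jj)).card : ℝ))) Q' -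
          (if Φ (Fin.castLE hM'.le ∘ f') (Fin.castLE hM'.le ∘ g') then 1 else 0)| ≤ ε) := by
  have hιinj : Function.Injective (Fin.castLE hM'.le) := Fin.castLE_injective hM'.le
  constructor
  · -- forward: substitute 0 for the high variables
    rintro ⟨Q, hdeg, hQ⟩
    set sub : (Fin M ⊕ Fin M) → MvPolynomial (Fin M' ⊕ Fin M') ℝ :=
      Sum.elim
        (fun i => if h : (i : ℕ) < M' then X (Sum.inl ⟨(i : ℕ), h⟩) else 0)
        (fun i => if h : (i : ℕ) < M' then X (Sum.inr ⟨(i : ℕ), h⟩) else 0) with hsub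
    refine ⟨aeval sub Q, ?_, ?_⟩
    · refine (totalDegree_aeval_le sub ?_ Q).trans hdeg
      intro a
      cases a with
      | inl i =>
        by_cases h : (i : ℕ) < M'
        · simp only [hsub, Sum.elim_inl, dif_pos h, totalDegree_X, le_refl]
        · simp only [hsub, Sum.elim_inl, dif_neg h, totalDegree_zero]
          exact Nat.zero_le _
      | inr i =>
        by_cases h : (i : ℕ) < M'
        · simp only [hsub, Sum.elim_inr, dif_pos h, totalDegree_X, le_refl]
        · simp only [hsub, Sum.elim_inr, dif_neg h, totalDegree_zero]
          exact Nat.zero_le _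
    · intro f' g'
      set w : Fin M' ⊕ Fin M' → ℝ := Sum.elim
        (fun jj : Fin M' => ((Finset.univ.filter (fun i => f' i = jj)).card : ℝ))
        (fun jj : Fin M' => ((Finset.univ.filter (fun k => g' k = jj)).card : ℝ)) with hw
      have hkey : eval w (aeval sub Q)
          = eval (Sum.elim
              (fun jj : Fin M =>
                ((Finset.univ.filter (fun i => (Fin.castLE hM'.le ∘ f') i = jj)).card : ℝ))
              (fun jj : Fin M =>
                ((Finset.univ.filter (fun k => (Fin.castLE hM'.le ∘ g') k = jj)).card : ℝ))) Q := by
        rw [eval_aeval']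
        have harg : (fun a => eval w (sub a)) = (Sum.elim
            (fun jj : Fin M =>
              ((Finset.univ.filter (fun i => (Fin.castLE hM'.le ∘ f') i = jj)).card : ℝ))
            (fun jj : Fin M =>
              ((Finset.univ.filter (fun k => (Fin.castLE hM'.le ∘ g') k = jj)).card : ℝ))) := by
          funext a
          cases a with
          | inl i =>
            by_cases h : (i : ℕ) < M'
            · simp only [hsub, Sum.elim_inl, dif_pos h, eval_X, hw]
              have hiff : ∀ x, (f' x = ⟨(i : ℕ), h⟩) ↔ (Fin.castLE hM'.le (f' x) = i) := by
                intro x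
                rw [Fin.ext_iff, Fin.ext_iff]
                simp [Fin.coe_castLE]
              rw [Finset.filter_congr (fun x _ => hiff x)]
              rfl
            · simp only [hsub, Sum.elim_inl, dif_neg h, map_zero]
              have : Finset.univ.filter
                  (fun x => (Fin.castLE hM'.le ∘ f') x = i) = ∅ := by
                rw [Finset.filter_eq_empty_iff]
                intro x _
                intro hx
                apply h
                rw [← hx]
                exact (f' x).isLt
              simp only [Sum.elim_inl, this, Finset.card_empty, Nat.cast_zero]
          | inr i =>
            by_cases h : (i : ℕ) < M'
            · simp only [hsub, Sum.elim_inr, dif_pos h, eval_X, hw]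
              have hiff : ∀ x, (g' x = ⟨(i : ℕ), h⟩) ↔ (Fin.castLE hM'.le (g' x) = i) := by
                intro x
                rw [Fin.ext_iff, Fin.ext_iff]
                simp [Fin.coe_castLE]
              rw [Finset.filter_congr (fun x _ => hiff x)]
              rfl
            · simp only [hsub, Sum.elim_inr, dif_neg h, map_zero]
              have : Finset.univ.filter
                  (fun x => (Fin.castLE hM'.le ∘ g') x = i) = ∅ := by
                rw [Finset.filter_eq_empty_iff]
                intro x _
                intro hx
                apply h
                rw [← hx]
                exact (g' x).isLt
              simp only [Sum.elim_inr, this, Finset.card_empty, Nat.cast_zero]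
        rw [harg]
      rw [hw] at hkey
      rw [hkey]
      exact hQ (Fin.castLE hM'.le ∘ f') (Fin.castLE hM'.le ∘ g')
  · -- backward: symmetrize and extend
    rintro ⟨Q', hdeg', hQ'⟩
    set S : MvPolynomial (Fin M' ⊕ Fin M') ℝ :=
      (((M')! : ℝ))⁻¹ • ∑ τ : Equiv.Perm (Fin M'), rename (Sum.map ⇑τ ⇑τ) Q' with hSdef
    have hSdeg : S.totalDegree ≤ d := by
      refine (totalDegree_smul_le _ _).trans ?_
      refine (totalDegree_finset_sum _ _).trans (Finset.sup_le fun τ _ => ?_)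
      exact (totalDegree_rename_le _ _).trans hdeg'
    have hSsym : ∀ τ₀ : Equiv.Perm (Fin M'), rename (Sum.map ⇑τ₀ ⇑τ₀) S = S := by
      intro τ₀
      rw [hSdef, map_smul, map_sum]
      congr 1
      have h1 : ∀ τ : Equiv.Perm (Fin M'),
          rename (Sum.map ⇑τ₀ ⇑τ₀) (rename (Sum.map ⇑τ ⇑τ) Q')
            = rename (Sum.map ⇑(τ₀ * τ) ⇑(τ₀ * τ)) Q' := by
        intro τ
        rw [rename_rename]
        have hcomp2 : Sum.map ⇑τ₀ ⇑τ₀ ∘ Sum.map ⇑τ ⇑τ = Sum.map ⇑(τ₀ * τ) ⇑(τ₀ * τ) := by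
          funext x
          cases x <;> simp [Sum.map, Function.comp, Equiv.Perm.mul_apply]
        rw [hcomp2]
      simp only [h1]
      exact Equiv.sum_comp (Equiv.mulLeft τ₀)
        (fun π : Equiv.Perm (Fin M') => rename (Sum.map ⇑π ⇑π) Q')
    have hcardP : ((Fintype.card (Equiv.Perm (Fin M')) : ℝ)) = (((M')! : ℝ)) := by
      rw [Fintype.card_perm, Fintype.card_fin]
    -- evaluation of S at count vectors
    have hSe : ∀ (f' : Fin F → Fin M') (g' : Fin G → Fin M'),
        eval (Sum.elim
          (fun jj : Fin M' => ((Finset.univ.filter (fun i => f' i = jj)).card : ℝ))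
          (fun jj : Fin M' => ((Finset.univ.filter (fun k => g' k = jj)).card : ℝ))) S
            ∈ Set.Icc (0:ℝ) 1 ∧
        |eval (Sum.elim
          (fun jj : Fin M' => ((Finset.univ.filter (fun i => f' i = jj)).card : ℝ))
          (fun jj : Fin M' => ((Finset.univ.filter (fun k => g' k = jj)).card : ℝ))) S -
          (if Φ (Fin.castLE hM'.le ∘ f') (Fin.castLE hM'.le ∘ g') then 1 else 0)| ≤ ε := by
      intro f' g'
      set w' : Fin M' ⊕ Fin M' → ℝ := Sum.elim
          (fun jj : Fin M' => ((Finset.univ.filter (fun i => f' i = jj)).card : ℝ))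
          (fun jj : Fin M' => ((Finset.univ.filter (fun k => g' k = jj)).card : ℝ)) with hw'
      have hw : eval w' S = ((Fintype.card (Equiv.Perm (Fin M')) : ℝ))⁻¹ *
          ∑ τ : Equiv.Perm (Fin M'), eval (w' ∘ Sum.map ⇑τ ⇑τ) Q' := by
        rw [hSdef, smul_eq_C_mul, map_mul, eval_C, map_sum, hcardP]
        congr 1
        exact Finset.sum_congr rfl fun τ _ => by rw [eval_rename]
      have hcomp : ∀ τ : Equiv.Perm (Fin M'), w' ∘ Sum.map ⇑τ ⇑τ
          = Sum.elim
            (fun jj : Fin M' =>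
              ((Finset.univ.filter (fun i => (⇑τ⁻¹ ∘ f') i = jj)).card : ℝ))
            (fun jj : Fin M' =>
              ((Finset.univ.filter (fun k => (⇑τ⁻¹ ∘ g') k = jj)).card : ℝ)) := by
        intro τ
        funext a
        cases a with
        | inl j =>
          show w' (Sum.inl (τ j)) = _
          rw [hw']
          simp only [Sum.elim_inl]
          congr 1
          refine congrArg Finset.card (Finset.filter_congr fun x _ => ?_)
          constructor
          · intro h
            show τ⁻¹ (f' x) = j
            rw [h]
            simp
          · intro h
            have h2 : τ ((⇑τ⁻¹ ∘ f') x) = τ j := congrArg τ h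
            simpa using h2
        | inr j =>
          show w' (Sum.inr (τ j)) = _
          rw [hw']
          simp only [Sum.elim_inr]
          congr 1
          refine congrArg Finset.card (Finset.filter_congr fun x _ => ?_)
          constructor
          · intro h
            show τ⁻¹ (g' x) = j
            rw [h]
            simp
          · intro h
            have h2 : τ ((⇑τ⁻¹ ∘ g') x) = τ j := congrArg τ h
            simpa using h2
      have hΦτ : ∀ τ : Equiv.Perm (Fin M'),
          Φ (Fin.castLE hM'.le ∘ (⇑τ⁻¹ ∘ f')) (Fin.castLE hM'.le ∘ (⇑τ⁻¹ ∘ g'))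
            = Φ (Fin.castLE hM'.le ∘ f') (Fin.castLE hM'.le ∘ g') := by
        intro τ
        obtain ⟨σx, hσx⟩ := exists_perm_comp
          (⟨Fin.castLE hM'.le, hιinj⟩ : Fin M' ↪ Fin M)
          (⟨fun j => Fin.castLE hM'.le (τ⁻¹ j), hιinj.comp (τ⁻¹).injective⟩ : Fin M' ↪ Fin M)
        have hfeq : Fin.castLE hM'.le ∘ (⇑τ⁻¹ ∘ f') = ⇑σx ∘ (Fin.castLE hM'.le ∘ f') :=
          funext fun x => (hσx (f' x)).symm
        have hgeq : Fin.castLE hM'.le ∘ (⇑τ⁻¹ ∘ g') = ⇑σx ∘ (Fin.castLE hM'.le ∘ g') :=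
          funext fun x => (hσx (g' x)).symm
        rw [hfeq, hgeq]
        have := hsym (Fin.castLE hM'.le ∘ f') (Fin.castLE hM'.le ∘ g')
          (Equiv.refl _) (Equiv.refl _) σx
        simpa using this
      have hterm : ∀ τ : Equiv.Perm (Fin M'),
          eval (w' ∘ Sum.map ⇑τ ⇑τ) Q' ∈ Set.Icc (0:ℝ) 1 ∧
          |eval (w' ∘ Sum.map ⇑τ ⇑τ) Q' -
            (if Φ (Fin.castLE hM'.le ∘ f') (Fin.castLE hM'.le ∘ g') then 1 else 0)| ≤ ε := by
        intro τ
        rw [hcomp τ, ← hΦτ τ]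
        exact hQ' (⇑τ⁻¹ ∘ f') (⇑τ⁻¹ ∘ g')
      rw [hw]
      constructor
      · exact avg_mem_Icc _ (fun τ => (hterm τ).1)
      · exact avg_abs_le _ _ _ (fun τ => (hterm τ).2)
    -- the extension polynomial
    refine ⟨TT hM'.le S, TT_totalDegree_le hM'.le S d hSdeg, ?_⟩
    intro f g
    -- find a permutation moving the supports into the first M' coordinates
    set Tset : Finset (Fin M) := (Finset.univ.image f) ∪ (Finset.univ.image g) with hTset
    have hTcard : Tset.card ≤ M' := by
      refine le_trans (Finset.card_union_le _ _) (le_trans ?_ hFG)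
      have h1 : (Finset.univ.image f).card ≤ F := by
        refine le_trans (Finset.card_image_le) ?_
        rw [Finset.card_univ, Fintype.card_fin]
      have h2 : (Finset.univ.image g).card ≤ G := by
        refine le_trans (Finset.card_image_le) ?_
        rw [Finset.card_univ, Fintype.card_fin]
      exact Nat.add_le_add h1 h2
    obtain ⟨Tsup, hsub1, _, hcardT⟩ := Finset.exists_subsuperset_card_eq
      (Finset.subset_univ Tset) hTcard
      (by rw [Finset.card_univ, Fintype.card_fin]; exact hM'.le)
    have hesub : Fintype.card {x // x ∈ Tsup} = Fintype.card (Fin M') := by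
      rw [Fintype.card_coe, hcardT, Fintype.card_fin]
    set esub : {x // x ∈ Tsup} ≃ Fin M' := Fintype.equivOfCardEq hesub with hesubdef
    obtain ⟨σ, hσ⟩ := exists_perm_comp
      (⟨Subtype.val, Subtype.val_injective⟩ : {x // x ∈ Tsup} ↪ Fin M)
      (⟨fun x => Fin.castLE hM'.le (esub x), hιinj.comp esub.injective⟩ : {x // x ∈ Tsup} ↪ Fin M)
    have hmem : ∀ x : Fin M, x ∈ Tsup → ((σ x : Fin M) : ℕ) < M' := by
      intro x hx
      have := hσ ⟨x, hx⟩
      simp only [Function.Embedding.coeFn_mk] at this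
      rw [this]
      exact (esub ⟨x, hx⟩).isLt
    have hfT : ∀ x, f x ∈ Tsup :=
      fun x => hsub1 (Finset.mem_union_left _ (Finset.mem_image_of_mem f (Finset.mem_univ x)))
    have hgT : ∀ x, g x ∈ Tsup :=
      fun x => hsub1 (Finset.mem_union_right _ (Finset.mem_image_of_mem g (Finset.mem_univ x)))
    set f' : Fin F → Fin M' := fun x => ⟨((σ (f x) : Fin M) : ℕ), hmem _ (hfT x)⟩ with hf'
    set g' : Fin G → Fin M' := fun x => ⟨((σ (g x) : Fin M) : ℕ), hmem _ (hgT x)⟩ with hg'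
    have hif : ∀ x, Fin.castLE hM'.le (f' x) = σ (f x) := fun x => rfl
    have hig : ∀ x, Fin.castLE hM'.le (g' x) = σ (g x) := fun x => rfl
    set v : Fin M ⊕ Fin M → ℝ := Sum.elim
        (fun jj : Fin M => ((Finset.univ.filter (fun i => f i = jj)).card : ℝ))
        (fun jj : Fin M => ((Finset.univ.filter (fun k => g k = jj)).card : ℝ)) with hv
    set v₂ : Fin M ⊕ Fin M → ℝ := v ∘ Sum.map ⇑σ⁻¹ ⇑σ⁻¹ with hv₂def
    have h1 : eval v (TT hM'.le S) = eval v₂ (TT hM'.le S) := by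
      conv_lhs => rw [← TT_rename hM'.le S σ⁻¹]
      rw [eval_rename]
    have hv₂0 : ∀ i : Fin M, M' ≤ (i : ℕ) → v₂ (Sum.inl i) = 0 ∧ v₂ (Sum.inr i) = 0 := by
      intro i hi
      constructor
      · show v (Sum.inl (σ⁻¹ i)) = 0
        rw [hv]
        simp only [Sum.elim_inl]
        have hempty : Finset.univ.filter (fun x => f x = σ⁻¹ i) = ∅ := by
          rw [Finset.filter_eq_empty_iff]
          intro x _
          intro hx
          have : σ (f x) = i := by rw [hx]; simp
          have h2 := hmem (f x) (hfT x)
          rw [this] at h2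
          omega
        rw [hempty]
        simp
      · show v (Sum.inr (σ⁻¹ i)) = 0
        rw [hv]
        simp only [Sum.elim_inr]
        have hempty : Finset.univ.filter (fun x => g x = σ⁻¹ i) = ∅ := by
          rw [Finset.filter_eq_empty_iff]
          intro x _
          intro hx
          have : σ (g x) = i := by rw [hx]; simp
          have h2 := hmem (g x) (hgT x)
          rw [this] at h2
          omega
        rw [hempty]
        simp
    have h2 : eval v₂ (TT hM'.le S)
        = eval (v₂ ∘ Sum.map (Fin.castLE hM'.le) (Fin.castLE hM'.le)) S :=
      eval_TT hM'.le S hSsym v₂ hv₂0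
    have h3 : v₂ ∘ Sum.map (Fin.castLE hM'.le) (Fin.castLE hM'.le)
        = Sum.elim
          (fun jj : Fin M' => ((Finset.univ.filter (fun i => f' i = jj)).card : ℝ))
          (fun jj : Fin M' => ((Finset.univ.filter (fun k => g' k = jj)).card : ℝ)) := by
      funext a
      cases a with
      | inl j =>
        show v (Sum.inl (σ⁻¹ (Fin.castLE hM'.le j))) = _
        rw [hv]
        simp only [Sum.elim_inl]
        congr 1
        refine congrArg Finset.card (Finset.filter_congr fun x _ => ?_)
        constructor
        · intro h
          apply hιinj
          rw [hif x]
          rw [h]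
          simp
        · intro h
          have : σ (f x) = Fin.castLE hM'.le j := by rw [← hif x, h]
          rw [← this]
          simp
      | inr j =>
        show v (Sum.inr (σ⁻¹ (Fin.castLE hM'.le j))) = _
        rw [hv]
        simp only [Sum.elim_inr]
        congr 1
        refine congrArg Finset.card (Finset.filter_congr fun x _ => ?_)
        constructor
        · intro h
          apply hιinj
          rw [hig x]
          rw [h]
          simp
        · intro h
          have : σ (g x) = Fin.castLE hM'.le j := by rw [← hig x, h]
          rw [← this]
          simp
    have hΦfg : Φ (Fin.castLE hM'.le ∘ f') (Fin.castLE hM'.le ∘ g') = Φ f g := by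
      have hfe : Fin.castLE hM'.le ∘ f' = ⇑σ ∘ f := funext fun x => hif x
      have hge : Fin.castLE hM'.le ∘ g' = ⇑σ ∘ g := funext fun x => hig x
      rw [hfe, hge]
      have := hsym f g (Equiv.refl _) (Equiv.refl _) σ
      simpa using this
    have h4 := hSe f' g'
    rw [← h3] at h4
    rw [hΦfg] at h4
    rw [hv] at h1
    rw [h1, h2]
    exact h4
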